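/- Let K′ be a polygonal knot in ℝ³ and let P ∈ K′. Assume that every edge of K′ containing P has a direction vector with nonzero third coordinate (no edge of K′ through P is parallel to the xy-plane). Then there exist ε > 0 and δ > 0 such that for every polygonal knot J = ⋃_{h=1}^n [V_h, V_{h+1}] (n ≥ 3) satisfying: P is a vertex of J; J is contained in the open ball of radius ε centered at P; and every line in ℝ³ intersecting at least three of the edges of J makes an angle smaller than δ with the xy-plane — one has J ∩ K′ = {P}. -/

import Mathlib

noncomputable section

/-- Euclidean 3-space. -/
abbrev E3 : Type := EuclideanSpace ℝ (Fin 3)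

open Metric Set

lemma ratio_smul_eq (κ : ℝ) (hκ : κ ≠ 0) (d : E3) :
    |(κ • d) 2| / ‖κ • d‖ = |d 2| / ‖d‖ := by
  have h1 : (κ • d) 2 = κ * d 2 := rfl
  rw [h1, norm_smul, abs_mul, Real.norm_eq_abs,
    mul_div_mul_left _ _ (abs_ne_zero.mpr hκ)]

lemma sub_of_mem_segment' {A B x y : E3} (hx : x ∈ segment ℝ A B)
    (hy : y ∈ segment ℝ A B) : ∃ r : ℝ, x - y = r • (B - A) := by
  rw [segment_eq_image'] at hx hy
  obtain ⟨t, _, rfl⟩ := hx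
  obtain ⟨s, _, rfl⟩ := hy
  exact ⟨t - s, by rw [sub_smul, add_sub_add_left_eq_sub]⟩

lemma isCompact_seg (A B : E3) : IsCompact (segment ℝ A B) := by
  rw [segment_eq_image']
  exact isCompact_Icc.image (continuous_const.add (continuous_id.smul continuous_const))

lemma fin_one_ne_zero' {n : ℕ} [NeZero n] (hn : 3 ≤ n) : (1 : Fin n) ≠ 0 := by
  obtain ⟨k, rfl⟩ : ∃ k, n = k + 3 := ⟨n - 3, by omega⟩
  simp [Fin.ext_iff]

lemma fin_two_ne_zero' {n : ℕ} [NeZero n] (hn : 3 ≤ n) : (2 : Fin n) ≠ 0 := by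
  obtain ⟨k, rfl⟩ : ∃ k, n = k + 3 := ⟨n - 3, by omega⟩
  simp [Fin.ext_iff]
  rw [Nat.mod_eq_of_lt (by omega)]; omega

lemma three_le_ncard {n : ℕ} {a b c : Fin n} {S : Set (Fin n)}
    (hab : a ≠ b) (hac : a ≠ c) (hbc : b ≠ c)
    (ha : a ∈ S) (hb : b ∈ S) (hc : c ∈ S) : 3 ≤ S.ncard := by
  have hsub : ({a, b, c} : Set (Fin n)) ⊆ S := by
    intro x hx
    rcases hx with rfl | rfl | rfl <;> assumption
  have h3 : ({a, b, c} : Set (Fin n)).ncard = 3 := by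
    rw [Set.ncard_insert_of_notMem (by simp [hab, hac]),
      Set.ncard_insert_of_notMem (by simp [hbc]), Set.ncard_singleton]
  calc (3 : ℕ) = ({a, b, c} : Set (Fin n)).ncard := h3.symm
    _ ≤ S.ncard := Set.ncard_le_ncard hsub (Set.toFinite _)

/-- Lemma 3 of the paper (`lem:PUnion`).

Let `K'` be a polygonal knot with vertices `V'` and let `P ∈ K'` be such that every
edge of `K'` containing `P` has direction vector with nonzero third coordinate.
Then there are `ε, δ > 0` such that every polygonal knot `J` having `P` as a vertex,
contained in the open ε-ball about `P`, and such that every line meeting at least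
three edges of `J` makes an angle `arcsin (|v 2| / ‖v‖) < δ` with the xy-plane,
satisfies `J ∩ K' = {P}`. -/
theorem PUnion
    (m : ℕ) [NeZero m] (hm : 3 ≤ m) (V' : Fin m → E3) (hV'inj : Function.Injective V')
    (K' : Set E3) (hK' : K' = ⋃ h : Fin m, segment ℝ (V' h) (V' (h + 1)))
    (hknot' : Nonempty (K' ≃ₜ Metric.sphere (0 : EuclideanSpace ℝ (Fin 2)) 1))
    (P : E3) (hP : P ∈ K')
    (hedge : ∀ h : Fin m, P ∈ segment ℝ (V' h) (V' (h + 1)) →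
      (V' (h + 1) - V' h) 2 ≠ 0) :
    ∃ ε > (0 : ℝ), ∃ δ > (0 : ℝ),
      ∀ (n : ℕ) (_ : NeZero n), 3 ≤ n → ∀ V : Fin n → E3, Function.Injective V →
        ∀ J : Set E3, J = ⋃ h : Fin n, segment ℝ (V h) (V (h + 1)) →
        Nonempty (J ≃ₜ Metric.sphere (0 : EuclideanSpace ℝ (Fin 2)) 1) →
        (∃ i : Fin n, V i = P) →
        J ⊆ Metric.ball P ε →
        (∀ a v : E3, v ≠ 0 →
          3 ≤ {h : Fin n | ({x : E3 | ∃ t : ℝ, x = a + t • v} ∩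
                segment ℝ (V h) (V (h + 1))).Nonempty}.ncard →
          Real.arcsin (|v 2| / ‖v‖) < δ) →
        J ∩ K' = {P} := by
  classical
  subst hK'
  set seg : Fin m → Set E3 := fun h => segment ℝ (V' h) (V' (h + 1)) with hseg
  have hne : (Finset.univ : Finset (Fin m)).Nonempty := Finset.univ_nonempty
  set f : Fin m → ℝ := fun h => if P ∈ seg h then 1 else Metric.infDist P (seg h) with hf
  set ε := Finset.univ.inf' hne f with hεdef
  have hεpos : 0 < ε := by
    rw [hεdef, Finset.lt_inf'_iff]
    intro h _
    by_cases hPh : P ∈ seg h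
    · simp [hf, hPh]
    · simp only [hf, if_neg hPh]
      exact ((isCompact_seg _ _).isClosed.notMem_iff_infDist_pos
        ⟨V' h, left_mem_segment ℝ _ _⟩).mp hPh
  set g : Fin m → ℝ := fun h =>
    if P ∈ seg h then |(V' (h + 1) - V' h) 2| / ‖V' (h + 1) - V' h‖ else 1 with hg
  set c0 := Finset.univ.inf' hne g with hc0def
  have hc0pos : 0 < c0 := by
    rw [hc0def, Finset.lt_inf'_iff]
    intro h _
    by_cases hPh : P ∈ seg h
    · simp only [hg, if_pos hPh]
      have h2 := hedge h hPh
      have hd0 : V' (h + 1) - V' h ≠ 0 := by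
        intro h0; exact h2 (by rw [h0]; rfl)
      exact div_pos (abs_pos.mpr h2) (norm_pos_iff.mpr hd0)
    · simp [hg, hPh]
  have hc0le : ∀ h : Fin m, P ∈ seg h →
      c0 ≤ |(V' (h + 1) - V' h) 2| / ‖V' (h + 1) - V' h‖ := by
    intro h hPh
    calc c0 ≤ g h := Finset.inf'_le _ (Finset.mem_univ _)
      _ = _ := by rw [hg]; simp [if_pos hPh]
  refine ⟨ε, hεpos, Real.arcsin c0, Real.arcsin_pos.mpr hc0pos, ?_⟩
  intro n hNZ hn V hVinj J hJ hknotJ hPv hJball hlines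
  haveI := hNZ
  obtain ⟨i, hi⟩ := hPv
  subst hJ
  have h10 : (1 : Fin n) ≠ 0 := fin_one_ne_zero' hn
  have h20 : (2 : Fin n) ≠ 0 := fin_two_ne_zero' hn
  apply Set.eq_singleton_iff_unique_mem.mpr
  constructor
  · exact ⟨Set.mem_iUnion.mpr ⟨i, hi ▸ left_mem_segment ℝ _ _⟩, hP⟩
  · rintro x ⟨hxJ, hxK⟩
    by_contra hxP
    -- x is on an edge of K' through P
    obtain ⟨h0, hxh0⟩ := Set.mem_iUnion.mp hxK
    have hPh0 : P ∈ seg h0 := by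
      by_contra hnP
      have h1 : ε ≤ Metric.infDist P (seg h0) := by
        calc ε ≤ f h0 := Finset.inf'_le _ (Finset.mem_univ _)
          _ = _ := by rw [hf]; simp [if_neg hnP]
      have h2 : Metric.infDist P (seg h0) ≤ dist P x :=
        Metric.infDist_le_dist_of_mem hxh0
      have h3 : dist x P < ε := mem_ball.mp (hJball hxJ)
      rw [dist_comm] at h3; linarith
    set d := V' (h0 + 1) - V' h0 with hd
    obtain ⟨r, hr⟩ := sub_of_mem_segment' hxh0 hPh0
    have hrne : r ≠ 0 := by
      intro h0'
      rw [h0', zero_smul] at hr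
      exact hxP (sub_eq_zero.mp hr)
    have hdrat : c0 ≤ |d 2| / ‖d‖ := hc0le h0 hPh0
    obtain ⟨h, hxh⟩ := Set.mem_iUnion.mp hxJ
    -- key contradiction lemma
    have key : ∀ (a u : E3), u ≠ 0 → (∃ ρ : ℝ, ρ ≠ 0 ∧ x - P = ρ • u) →
        3 ≤ {k : Fin n | ({y : E3 | ∃ t : ℝ, y = a + t • u} ∩
              segment ℝ (V k) (V (k + 1))).Nonempty}.ncard → False := by
      rintro a u hu ⟨ρ, hρ, hxu⟩ hcard
      have hlt := hlines a u hu hcard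
      have hud : u = (ρ⁻¹ * r) • d := by
        have heq : ρ • u = r • d := by rw [← hxu, hr]
        calc u = ρ⁻¹ • (ρ • u) := by rw [smul_smul, inv_mul_cancel₀ hρ, one_smul]
          _ = ρ⁻¹ • (r • d) := by rw [heq]
          _ = (ρ⁻¹ * r) • d := by rw [smul_smul]
      have hκ : ρ⁻¹ * r ≠ 0 := mul_ne_zero (inv_ne_zero hρ) hrne
      have hrat : |u 2| / ‖u‖ = |d 2| / ‖d‖ := by
        rw [hud]; exact ratio_smul_eq _ hκ _
      have h4 : Real.arcsin c0 ≤ Real.arcsin (|u 2| / ‖u‖) :=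
        Real.monotone_arcsin (by rw [hrat]; exact hdrat)
      linarith
    by_cases hcase : h = i ∨ h = i - 1
    · -- x on an edge of J adjacent to P : use the line containing that edge
      set w := V (h + 1) - V h with hw
      have hPseg : P ∈ segment ℝ (V h) (V (h + 1)) := by
        rcases hcase with rfl | rfl
        · exact hi ▸ left_mem_segment ℝ _ _
        · have hii : (i - 1) + 1 = i := sub_add_cancel i 1
          rw [hii]
          exact hi ▸ right_mem_segment ℝ _ _
      obtain ⟨ρ, hρeq⟩ := sub_of_mem_segment' hxh hPseg
      have hwne : w ≠ 0 := by
        intro h0'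
        rw [← hw, h0', smul_zero] at hρeq
        exact hxP (sub_eq_zero.mp hρeq)
      have hρne : ρ ≠ 0 := by
        intro h0'
        rw [h0', zero_smul] at hρeq
        exact hxP (sub_eq_zero.mp hρeq)
      apply key (V h) w hwne ⟨ρ, hρne, by rw [hw]; exact hρeq⟩
      -- the line contains V h ∈ edge (h-1), V h ∈ edge h, V (h+1) ∈ edge (h+1)
      have m1 : V h ∈ {y : E3 | ∃ t : ℝ, y = V h + t • w} := ⟨0, by simp⟩
      have m2 : V (h + 1) ∈ {y : E3 | ∃ t : ℝ, y = V h + t • w} := ⟨1, by simp [hw]⟩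
      have e1 : V h ∈ segment ℝ (V (h - 1)) (V ((h - 1) + 1)) := by
        rw [sub_add_cancel]; exact right_mem_segment ℝ _ _
      have hne1 : h - 1 ≠ h := fun he => h10 (by
        have := sub_eq_self.mp he; exact this)
      have hne2 : h ≠ h + 1 := fun he => h10 ((left_eq_add.mp he).symm ▸ rfl)
      have hne3 : h - 1 ≠ h + 1 := by
        intro he
        have : h = h + 1 + 1 := by
          rw [← he]; rw [sub_add_cancel]
        rw [add_assoc] at this
        have h2 := left_eq_add.mp this
        have h2 : (2 : Fin n) = 0 := by rw [← h2]; ext; simp [Fin.val_add]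
        exact h20 h2
      exact three_le_ncard hne1 hne3 hne2.symm.symm
        (by exact ⟨V h, m1, e1⟩)
        (by exact ⟨V h, m1, left_mem_segment ℝ _ _⟩)
        (by exact ⟨V (h + 1), m2, left_mem_segment ℝ _ _⟩)
    · -- generic case : line through P and x
      push_neg at hcase
      obtain ⟨hci, hci1⟩ := hcase
      have hune : x - P ≠ 0 := sub_ne_zero.mpr hxP
      apply key P (x - P) hune ⟨1, one_ne_zero, (one_smul _ _).symm⟩
      have mP : P ∈ {y : E3 | ∃ t : ℝ, y = P + t • (x - P)} := ⟨0, by simp⟩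
      have mx : x ∈ {y : E3 | ∃ t : ℝ, y = P + t • (x - P)} := ⟨1, by simp⟩
      have e1 : P ∈ segment ℝ (V (i - 1)) (V ((i - 1) + 1)) := by
        rw [sub_add_cancel]; exact hi ▸ right_mem_segment ℝ _ _
      have e2 : P ∈ segment ℝ (V i) (V (i + 1)) := hi ▸ left_mem_segment ℝ _ _
      have hne1 : i - 1 ≠ i := fun he => h10 (sub_eq_self.mp he)
      exact three_le_ncard hne1 (fun he => hci1 he.symm) (fun he => hci he.symm)
        ⟨P, mP, e1⟩ ⟨P, mP, e2⟩ ⟨x, mx, hxh⟩
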